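/- In the power allocation game with α_i > 0 and λ_i ≥ 0 for all i, define the M×M matrix Q by Q_{p,p} = α_p·W and, for p ≠ q, Q_{p,q} = −α_p·W·(a_{p,q}/a_{q,q})·(1 + σ^{−2}·∑_{i=1}^M a_{q,i}·p_i^max). If Q is a P-matrix, then the game admits exactly one Nash equilibrium: there is a unique profile p* ∈ P such that for every i ∈ {1,…,M} and every q ∈ [0, p_i^max], replacing the i-th coordinate of p* by q does not increase φ_i. -/

import Mathlib

open Finset

/-- Equivalent channel gain of player `i` under power profile `p`:
`g_i(p) = a_{i,i} / (∑_{ℓ ≠ i} a_{i,ℓ}·p_ℓ + σ²)`. -/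
noncomputable def gain (M : ℕ) (σ2 : ℝ) (a : Fin M → Fin M → ℝ)
    (p : Fin M → ℝ) (i : Fin M) : ℝ :=
  a i i / ((∑ ℓ ∈ Finset.univ.erase i, a i ℓ * p ℓ) + σ2)

/-- Payoff of player `i`: `φ_i(p) = α_i·W·log(1 + g_i(p)·p_i) − λ_i·p_i`. -/
noncomputable def payoff (M : ℕ) (W σ2 : ℝ) (α lam : Fin M → ℝ)
    (a : Fin M → Fin M → ℝ) (p : Fin M → ℝ) (i : Fin M) : ℝ :=
  α i * W * Real.log (1 + gain M σ2 a p i * p i) - lam i * p i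

/-- The joint strategy set `P = ∏_{i=1}^M [0, p_i^max]`. -/
def stratBox (M : ℕ) (pmax : Fin M → ℝ) : Set (Fin M → ℝ) :=
  {p | ∀ i, p i ∈ Set.Icc (0 : ℝ) (pmax i)}

/-- `p` is a Nash equilibrium: no player can improve its payoff by unilaterally
changing its own power within `[0, p_i^max]`. -/
def IsNE (M : ℕ) (W σ2 : ℝ) (α lam pmax : Fin M → ℝ)
    (a : Fin M → Fin M → ℝ) (p : Fin M → ℝ) : Prop :=
  ∀ i, ∀ q ∈ Set.Icc (0 : ℝ) (pmax i),
    payoff M W σ2 α lam a (Function.update p i q) i ≤ payoff M W σ2 α lam a p i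


/-- The matrix `Q` of Theorem 1: `Q_{p,p} = α_p·W` and, for `p ≠ q`,
`Q_{p,q} = −α_p·W·(a_{p,q}/a_{q,q})·(1 + σ⁻²·∑_i a_{q,i}·p_i^max)`. -/
noncomputable def Qmat (M : ℕ) (W σ2 : ℝ) (α pmax : Fin M → ℝ)
    (a : Fin M → Fin M → ℝ) : Matrix (Fin M) (Fin M) ℝ :=
  fun p q =>
    if p = q then α p * W
    else -(α p * W * (a p q / a q q) * (1 + σ2⁻¹ * ∑ i, a q i * pmax i))

/-- A real square matrix is a P-matrix if every principal minor is positive. -/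
def IsPMatrix {n : ℕ} (A : Matrix (Fin n) (Fin n) ℝ) : Prop :=
  ∀ S : Finset (Fin n), S.Nonempty →
    0 < (A.submatrix (fun i : S => (i : Fin n)) (fun j : S => (j : Fin n))).det

open Matrix

/-- Schur complement determinant identity for elimination at index 0. -/
lemma det_schur_zero {n : ℕ} (B : Matrix (Fin (n+1)) (Fin (n+1)) ℝ) (h : B 0 0 ≠ 0) :
    B.det = B 0 0 * Matrix.det (fun i j : Fin n =>
      B i.succ j.succ - B i.succ 0 * B 0 j.succ / B 0 0) := by
  classical
  set c : Fin (n+1) → ℝ := fun i => Fin.cases 0 (fun i' => -(B i 0 / B 0 0)) i with hc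
  set C : Matrix (Fin (n+1)) (Fin (n+1)) ℝ := fun i j => B i j + c i * B 0 j with hC
  have hdet : C.det = B.det := Matrix.det_eq_of_forall_row_eq_smul_add_const c 0 rfl
    (fun i j => rfl)
  have hC0 : ∀ j, C 0 j = B 0 j := by intro j; simp [hC, hc]
  have hCs : ∀ (i : Fin n) j, C i.succ j = B i.succ j - B i.succ 0 / B 0 0 * B 0 j := by
    intro i j; simp [hC, hc]; ring
  have hcol : ∀ i : Fin n, C i.succ 0 = 0 := by
    intro i; rw [hCs]; field_simp; ring
  rw [← hdet, Matrix.det_succ_column_zero]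
  rw [Fin.sum_univ_succ]
  have : ∀ i : Fin n, (-1 : ℝ) ^ ((i.succ : Fin (n+1)) : ℕ) * C i.succ 0 *
      ((C.submatrix i.succ.succAbove Fin.succ).det) = 0 := by
    intro i; rw [hcol]; ring
  rw [Finset.sum_congr rfl (fun i _ => this i), Finset.sum_const_zero, add_zero]
  simp only [Fin.val_zero, pow_zero, one_mul, hC0]
  congr 1
  · -- determinants equal
    congr 1
    ext i j
    simp only [Matrix.submatrix_apply]
    rw [Fin.succAbove_zero, hCs]
    ring

lemma isPMatrix_submatrix {n m : ℕ} {A : Matrix (Fin n) (Fin n) ℝ} (hA : IsPMatrix A)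
    (f : Fin m → Fin n) (hf : Function.Injective f) : IsPMatrix (A.submatrix f f) := by
  intro S hS
  set S' : Finset (Fin n) := S.image f with hS'
  have hS'ne : S'.Nonempty := hS.image f
  let e : (S : Finset (Fin m)) ≃ (S' : Finset (Fin n)) :=
    { toFun := fun i => ⟨f i, Finset.mem_image_of_mem f i.2⟩
      invFun := fun j => ⟨S.choose (fun x => f x = j) (by
          obtain ⟨x, hx, hfx⟩ := Finset.mem_image.mp j.2
          exact ⟨x, ⟨hx, hfx⟩, fun y hy => hf (hy.2.trans hfx.symm)⟩),
        (S.choose_mem _ _)⟩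
      left_inv := fun i => Subtype.ext (hf (S.choose_property (fun x => f x = f i) _))
      right_inv := fun j => Subtype.ext (S.choose_property (fun x => f x = (j : Fin n)) _) }
  have key : ((A.submatrix f f).submatrix (fun i : S => (i : Fin m)) (fun j : S => (j : Fin m)))
      = (A.submatrix (fun i : S' => (i : Fin n)) (fun j : S' => (j : Fin n))).submatrix e e := by
    ext i j; rfl
  rw [key, Matrix.det_submatrix_equiv_self]
  exact hA S' hS'ne

lemma det_pos_of_isPMatrix {n : ℕ} {A : Matrix (Fin n) (Fin n) ℝ} (hn : 0 < n)
    (hA : IsPMatrix A) : 0 < A.det := by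
  have := hA Finset.univ ⟨⟨0, hn⟩, Finset.mem_univ _⟩
  let e : ((Finset.univ : Finset (Fin n)) : Finset (Fin n)) ≃ Fin n :=
    { toFun := fun i => (i : Fin n), invFun := fun i => ⟨i, Finset.mem_univ i⟩,
      left_inv := fun i => rfl, right_inv := fun i => rfl }
  have key : (A.submatrix (fun i : (Finset.univ : Finset (Fin n)) => (i : Fin n))
      (fun j : (Finset.univ : Finset (Fin n)) => (j : Fin n))) = A.submatrix e e := by
    ext i j; rfl
  rwa [key, Matrix.det_submatrix_equiv_self] at this

lemma diag_pos_of_isPMatrix {n : ℕ} {A : Matrix (Fin n) (Fin n) ℝ} (hA : IsPMatrix A)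
    (i : Fin n) : 0 < A i i := by
  have h := hA {i} ⟨i, Finset.mem_singleton_self i⟩
  haveI : Unique ({i} : Finset (Fin n)) :=
    ⟨⟨⟨i, Finset.mem_singleton_self i⟩⟩, fun x => Subtype.ext (Finset.mem_singleton.mp x.2)⟩
  rw [Matrix.det_unique] at h
  have hd : ((default : ({i} : Finset (Fin n))) : Fin n) = i :=
    Finset.mem_singleton.mp (Subtype.mem _)
  simpa [Matrix.submatrix_apply, hd] using h
lemma keyAux : ∀ (n : ℕ) (A : Matrix (Fin (n+1)) (Fin (n+1)) ℝ),
    (∀ i j, i ≠ j → A i j ≤ 0) → IsPMatrix A →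
    ∀ x : Fin (n+1) → ℝ, (∀ i, 0 < x i) → (∀ i, A.mulVec x i ≤ 0) → False := by
  intro n
  induction n with
  | zero =>
    intro A hZ hP x hx hAx
    have h0 := hAx 0
    rw [Matrix.mulVec, dotProduct, Fin.sum_univ_one] at h0
    exact absurd h0 (not_le.mpr (mul_pos (diag_pos_of_isPMatrix hP 0) (hx 0)))
  | succ n ih =>
    intro A hZ hP x hx hAx
    have hA00 : 0 < A 0 0 := diag_pos_of_isPMatrix hP 0
    set S : Matrix (Fin (n+1)) (Fin (n+1)) ℝ :=
      fun i j => A i.succ j.succ - A i.succ 0 * A 0 j.succ / A 0 0 with hSdef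
    have hSZ : ∀ i j : Fin (n+1), i ≠ j → S i j ≤ 0 := by
      intro i j hij
      have h1 : A i.succ j.succ ≤ 0 := hZ _ _ (fun h => hij (Fin.succ_injective _ h))
      have h2 : A i.succ 0 ≤ 0 := hZ _ _ (Fin.succ_ne_zero i)
      have h3 : A 0 j.succ ≤ 0 := hZ _ _ (Fin.succ_ne_zero j).symm
      have h4 : 0 ≤ A i.succ 0 * A 0 j.succ / A 0 0 :=
        div_nonneg (by nlinarith) hA00.le
      simp only [hSdef]; linarith
    have hSP : IsPMatrix S := by
      intro T hT
      obtain ⟨m, hm⟩ : ∃ m, T.card = m + 1 :=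
        Nat.exists_eq_succ_of_ne_zero (Finset.card_ne_zero_of_mem hT.choose_spec)
      let eo := T.orderIsoOfFin hm
      let f : Fin (m+1) → Fin (n+1) := fun i => (eo i : Fin (n+1))
      have hf : Function.Injective f := fun i j h => eo.injective (Subtype.ext h)
      have step1 : ((S.submatrix (fun i : T => (i : Fin (n+1))) (fun j : T => (j : Fin (n+1)))).det)
          = Matrix.det (fun i j : Fin (m+1) => S (f i) (f j)) := by
        rw [show (fun i j : Fin (m+1) => S (f i) (f j))
            = (S.submatrix (fun i : T => (i : Fin (n+1)))
                (fun j : T => (j : Fin (n+1)))).submatrix eo.toEquiv eo.toEquiv from rfl,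
          Matrix.det_submatrix_equiv_self]
      let g : Fin (m+2) → Fin (n+2) := fun i => Fin.cases 0 (fun i' => (f i').succ) i
      have hg : Function.Injective g := by
        intro i j h
        obtain rfl | ⟨i', rfl⟩ := Fin.eq_zero_or_eq_succ i <;>
          obtain rfl | ⟨j', rfl⟩ := Fin.eq_zero_or_eq_succ j <;>
          simp only [g, Fin.cases_zero, Fin.cases_succ] at h
        · rfl
        · exact absurd h.symm (Fin.succ_ne_zero _)
        · exact absurd h (Fin.succ_ne_zero _)
        · exact congrArg Fin.succ (hf (Fin.succ_injective _ h))
      have hBP : IsPMatrix (A.submatrix g g) := isPMatrix_submatrix hP g hg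
      have hBdet : 0 < (A.submatrix g g).det :=
        det_pos_of_isPMatrix (Nat.succ_pos _) hBP
      have hB00 : (A.submatrix g g) 0 0 = A 0 0 := rfl
      rw [det_schur_zero _ (by rw [hB00]; exact hA00.ne')] at hBdet
      have hschur : (fun i j : Fin (m+1) =>
          (A.submatrix g g) i.succ j.succ - (A.submatrix g g) i.succ 0 *
            (A.submatrix g g) 0 j.succ / (A.submatrix g g) 0 0)
          = fun i j : Fin (m+1) => S (f i) (f j) := by
        ext i j
        simp only [Matrix.submatrix_apply, g, Fin.cases_zero, Fin.cases_succ, hSdef]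
      rw [hschur, hB00] at hBdet
      rw [step1]
      by_contra hcon
      push_neg at hcon
      nlinarith
    have hx' : ∀ i : Fin (n+1), 0 < x i.succ := fun i => hx i.succ
    have hSx : ∀ i : Fin (n+1), S.mulVec (fun j => x j.succ) i ≤ 0 := by
      intro i
      have hsum : S.mulVec (fun j => x j.succ) i
          = A.mulVec x i.succ - A i.succ 0 / A 0 0 * A.mulVec x 0 := by
        simp only [Matrix.mulVec, dotProduct]
        rw [Fin.sum_univ_succ (f := fun j => A i.succ j * x j),
          Fin.sum_univ_succ (f := fun j => A 0 j * x j)]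
        simp only [hSdef, sub_mul]
        rw [Finset.sum_sub_distrib]
        have hterm : ∀ j : Fin (n+1), j ∈ Finset.univ → A i.succ 0 * A 0 j.succ / A 0 0 * x j.succ
            = A i.succ 0 / A 0 0 * (A 0 j.succ * x j.succ) := fun j _ => by ring
        rw [Finset.sum_congr rfl hterm, ← Finset.mul_sum, mul_add,
          show A i.succ 0 / A 0 0 * (A 0 0 * x 0) = A i.succ 0 * x 0 from by field_simp]
        ring
      rw [hsum]
      have h2 : A i.succ 0 / A 0 0 ≤ 0 :=
        div_nonpos_iff.mpr (Or.inr ⟨hZ _ _ (Fin.succ_ne_zero i), hA00.le⟩)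
      have : 0 ≤ A i.succ 0 / A 0 0 * A.mulVec x 0 := by nlinarith [hAx 0]
      linarith [hAx i.succ]
    exact ih S hSZ hSP _ hx' hSx


lemma key_nonneg {n : ℕ} (A : Matrix (Fin n) (Fin n) ℝ)
    (hZ : ∀ i j, i ≠ j → A i j ≤ 0) (hP : IsPMatrix A)
    (x : Fin n → ℝ) (hx : ∀ i, 0 ≤ x i) (hAx : ∀ i, A.mulVec x i ≤ 0) :
    ∀ i, x i = 0 := by
  by_contra hcon
  push_neg at hcon
  obtain ⟨i0, hi0⟩ := hcon
  set T : Finset (Fin n) := Finset.univ.filter (fun i => 0 < x i) with hT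
  have hxT : ∀ q, q ∉ T → x q = 0 := by
    intro q hq
    simp only [hT, Finset.mem_filter, Finset.mem_univ, true_and, not_lt] at hq
    exact le_antisymm hq (hx q)
  have hi0T : i0 ∈ T := by
    simp only [hT, Finset.mem_filter, Finset.mem_univ, true_and]
    exact lt_of_le_of_ne (hx i0) (Ne.symm hi0)
  obtain ⟨m, hm⟩ : ∃ m, T.card = m + 1 :=
    Nat.exists_eq_succ_of_ne_zero (Finset.card_ne_zero_of_mem hi0T)
  let eo := T.orderIsoOfFin hm
  let f : Fin (m+1) → Fin n := fun i => (eo i : Fin n)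
  have hf : Function.Injective f := fun i j h => eo.injective (Subtype.ext h)
  have hfT : ∀ j, f j ∈ T := fun j => (eo j).2
  refine keyAux m (A.submatrix f f) ?_ (isPMatrix_submatrix hP f hf)
    (fun j => x (f j)) ?_ ?_
  · intro i j hij
    exact hZ _ _ (fun h => hij (hf h))
  · intro j
    have := hfT j
    simp only [hT, Finset.mem_filter] at this
    exact this.2
  · intro i
    have hsum : (A.submatrix f f).mulVec (fun j => x (f j)) i = A.mulVec x (f i) := by
      simp only [Matrix.mulVec, dotProduct, Matrix.submatrix_apply]
      rw [show (∑ j : Fin (m+1), A (f i) (f j) * x (f j))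
          = ∑ q : T, A (f i) (q : Fin n) * x (q : Fin n) from
        (Equiv.sum_comp eo.toEquiv (fun q : T => A (f i) (q : Fin n) * x (q : Fin n))),
        Finset.sum_coe_sort T (fun q => A (f i) q * x q)]
      exact Finset.sum_subset (Finset.subset_univ T)
        (fun q _ hq => by rw [hxT q hq, mul_zero])
    rw [hsum]
    exact hAx (f i)

/-- Single-player optimality of the clamped best response. -/
lemma br_opt {αW g lam m : ℝ} (hαW : 0 < αW) (hg : 0 < g) (hlam : 0 ≤ lam) (hm : 0 < m)
    {br : ℝ} (hbr : br = if lam = 0 then m else min m (max 0 (αW / lam - 1 / g))) :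
    br ∈ Set.Icc 0 m ∧ ∀ q ∈ Set.Icc (0:ℝ) m, q ≠ br →
      αW * Real.log (1 + g * q) - lam * q < αW * Real.log (1 + g * br) - lam * br := by
  have hbr_mem : br ∈ Set.Icc 0 m := by
    rw [hbr]
    split_ifs with h
    · exact ⟨hm.le, le_refl m⟩
    · exact ⟨le_min hm.le (le_max_left 0 _), min_le_left _ _⟩
  refine ⟨hbr_mem, ?_⟩
  intro q hq hne
  have h1q : 0 < 1 + g * q := by nlinarith [hq.1]
  have h1b : 0 < 1 + g * br := by nlinarith [hbr_mem.1]
  have hzne : (1 + g * q) / (1 + g * br) ≠ 1 := by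
    intro h
    rw [div_eq_one_iff_eq h1b.ne'] at h
    exact hne (by nlinarith)
  have hlog : Real.log (1 + g * q) - Real.log (1 + g * br) < g * (q - br) / (1 + g * br) := by
    have h := Real.log_lt_sub_one_of_pos (div_pos h1q h1b) hzne
    rw [Real.log_div h1q.ne' h1b.ne'] at h
    have heq : (1 + g * q) / (1 + g * br) - 1 = g * (q - br) / (1 + g * br) := by
      field_simp
      ring
    linarith
  have hfactor : (q - br) * (αW * g / (1 + g * br) - lam) ≤ 0 := by
    by_cases h0 : lam = 0
    · have hbrm : br = m := by rw [hbr, if_pos h0]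
      have hf : 0 ≤ αW * g / (1 + g * br) - lam := by
        rw [h0]
        have := div_nonneg (mul_pos hαW hg).le h1b.le
        linarith
      exact mul_nonpos_iff.mpr (Or.inr ⟨by rw [hbrm]; linarith [hq.2], hf⟩)
    · have hlam' : 0 < lam := lt_of_le_of_ne hlam (Ne.symm h0)
      set c : ℝ := αW / lam - 1 / g with hc_def
      rcases le_or_gt c 0 with hc | hc
      · have hbr0 : br = 0 := by
          rw [hbr, if_neg h0, max_eq_left hc, min_eq_right hm.le]
        have hgl : αW * g ≤ 1 * lam := by
          have h' : αW / lam ≤ 1 / g := by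
            have : αW / lam - 1 / g ≤ 0 := hc
            linarith
          exact (div_le_div_iff₀ hlam' hg).mp h'
        rw [hbr0]
        have : (q - 0) * (αW * g / (1 + g * 0) - lam) = q * (αW * g - lam) := by
          norm_num
        rw [this]
        exact mul_nonpos_iff.mpr (Or.inl ⟨hq.1, by linarith⟩)
      · rcases lt_or_ge c m with hcm | hmc
        · have hbrc : br = c := by
            rw [hbr, if_neg h0, max_eq_right hc.le, min_eq_right hcm.le]
          have h1 : 1 + g * c = g * αW / lam := by
            rw [hc_def]; field_simp; ring
          have : αW * g / (1 + g * c) - lam = 0 := by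
            rw [h1]
            field_simp
            ring
          rw [hbrc, this, mul_zero]
        · have hbrm : br = m := by
            rw [hbr, if_neg h0, max_eq_right hc.le, min_eq_left hmc]
          have h1m : 0 < 1 + g * m := by nlinarith
          have hlc : lam * (1 + g * c) = g * αW := by
            rw [hc_def]; field_simp; ring
          have hf : 0 ≤ αW * g / (1 + g * m) - lam := by
            rw [sub_nonneg, le_div_iff₀ h1m]
            linarith [mul_nonneg (mul_nonneg hlam hg.le) (sub_nonneg.2 hmc)]
          exact mul_nonpos_iff.mpr (Or.inr ⟨by rw [hbrm]; linarith [hq.2], by rw [hbrm]; exact hf⟩)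
  have h2 : αW * (Real.log (1 + g * q) - Real.log (1 + g * br))
      < αW * (g * (q - br) / (1 + g * br)) := mul_lt_mul_of_pos_left hlog hαW
  have hkey : αW * (g * (q - br) / (1 + g * br)) - lam * (q - br)
      = (q - br) * (αW * g / (1 + g * br) - lam) := by ring
  nlinarith [h2, hfactor, hkey]

/-- **Theorem 1, uniqueness of the NE.** If `Q` is a P-matrix, then
the power allocation game admits exactly one Nash equilibrium. -/
theorem unique_nash_equilibrium_of_isPMatrix (M : ℕ) (hM : 1 ≤ M) (W σ2 : ℝ)
    (hW : 0 < W) (hσ2 : 0 < σ2) (α lam pmax : Fin M → ℝ)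
    (a : Fin M → Fin M → ℝ)
    (hα : ∀ i, 0 < α i) (hlam : ∀ i, 0 ≤ lam i) (hpmax : ∀ i, 0 < pmax i)
    (ha : ∀ i ℓ, 0 ≤ a i ℓ) (haii : ∀ i, 0 < a i i)
    (hQ : IsPMatrix (Qmat M W σ2 α pmax a)) :
    ∃! pstar : Fin M → ℝ,
      pstar ∈ stratBox M pmax ∧ IsNE M W σ2 α lam pmax a pstar := by
  classical
  -- the best-response map
  set T : (Fin M → ℝ) → (Fin M → ℝ) := fun p i =>
    if lam i = 0 then pmax i
    else min (pmax i) (max 0 (α i * W / lam i -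
      ((∑ ℓ ∈ Finset.univ.erase i, a i ℓ * p ℓ) + σ2) / a i i)) with hT
  have hTbox : ∀ p i, T p i ∈ Set.Icc (0:ℝ) (pmax i) := by
    intro p i
    simp only [hT]
    split_ifs
    · exact ⟨(hpmax i).le, le_rfl⟩
    · exact ⟨le_min (hpmax i).le (le_max_left 0 _), min_le_left _ _⟩
  -- antitonicity
  have hTanti : ∀ p p', (∀ ℓ, p ℓ ≤ p' ℓ) → ∀ i, T p' i ≤ T p i := by
    intro p p' h i
    simp only [hT]
    split_ifs with h0
    · exact le_rfl
    · refine min_le_min le_rfl (max_le_max le_rfl (sub_le_sub_left ?_ _))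
      gcongr with ℓ hℓ
      all_goals first
        | exact (haii i).le
        | exact h ℓ
        | exact ha i ℓ
  -- Lipschitz bound
  have hTlip : ∀ p p' i, a i i * |T p i - T p' i|
      ≤ ∑ ℓ ∈ Finset.univ.erase i, a i ℓ * |p ℓ - p' ℓ| := by
    intro p p' i
    simp only [hT]
    split_ifs with h0
    · rw [sub_self, abs_zero, mul_zero]
      exact Finset.sum_nonneg fun ℓ _ => mul_nonneg (ha i ℓ) (abs_nonneg _)
    · set A := α i * W / lam i -
        ((∑ ℓ ∈ Finset.univ.erase i, a i ℓ * p ℓ) + σ2) / a i i with hA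
      set B := α i * W / lam i -
        ((∑ ℓ ∈ Finset.univ.erase i, a i ℓ * p' ℓ) + σ2) / a i i with hB
      have step1 : |min (pmax i) (max 0 A) - min (pmax i) (max 0 B)| ≤ |A - B| := by
        refine (abs_min_sub_min_le_max _ _ _ _).trans ?_
        rw [sub_self, abs_zero]
        refine max_le (abs_nonneg _) ?_
        rw [max_comm 0 A, max_comm 0 B]
        exact abs_max_sub_max_le_abs A B 0
      have haine : a i i ≠ 0 := (haii i).ne'
      have hsum : (∑ ℓ ∈ Finset.univ.erase i, a i ℓ * (p' ℓ - p ℓ))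
          = (∑ ℓ ∈ Finset.univ.erase i, a i ℓ * p' ℓ)
            - (∑ ℓ ∈ Finset.univ.erase i, a i ℓ * p ℓ) := by
        rw [← Finset.sum_sub_distrib]
        exact Finset.sum_congr rfl fun ℓ _ => by ring
      have hAB : A - B = (∑ ℓ ∈ Finset.univ.erase i, a i ℓ * (p' ℓ - p ℓ)) / a i i := by
        rw [hA, hB, hsum]
        field_simp
        ring
      have step2 : |A - B| = |(∑ ℓ ∈ Finset.univ.erase i, a i ℓ * (p' ℓ - p ℓ))| / a i i := by
        rw [hAB, abs_div, abs_of_pos (haii i)]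
      have step3 : |(∑ ℓ ∈ Finset.univ.erase i, a i ℓ * (p' ℓ - p ℓ))|
          ≤ ∑ ℓ ∈ Finset.univ.erase i, a i ℓ * |p ℓ - p' ℓ| := by
        refine (Finset.abs_sum_le_sum_abs _ _).trans (Finset.sum_le_sum fun ℓ _ => ?_)
        rw [abs_mul, abs_of_nonneg (ha i ℓ), abs_sub_comm]
      calc a i i * |min (pmax i) (max 0 A) - min (pmax i) (max 0 B)|
          ≤ a i i * (|(∑ ℓ ∈ Finset.univ.erase i, a i ℓ * (p' ℓ - p ℓ))| / a i i) := by
            refine mul_le_mul_of_nonneg_left ?_ (haii i).le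
            rw [← step2]; exact step1
        _ = |(∑ ℓ ∈ Finset.univ.erase i, a i ℓ * (p' ℓ - p ℓ))| := by
            field_simp
        _ ≤ _ := step3
  -- NE iff fixed point of T
  have hfix_iff : ∀ p, p ∈ stratBox M pmax →
      (IsNE M W σ2 α lam pmax a p ↔ ∀ i, p i = T p i) := by
    intro p hp
    have hsetup : ∀ i : Fin M,
        (T p i ∈ Set.Icc 0 (pmax i)) ∧ ∀ q ∈ Set.Icc (0:ℝ) (pmax i), q ≠ T p i →
          α i * W * Real.log (1 + gain M σ2 a p i * q) - lam i * q <
          α i * W * Real.log (1 + gain M σ2 a p i * (T p i)) - lam i * (T p i) := by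
      intro i
      have hD : 0 < (∑ ℓ ∈ Finset.univ.erase i, a i ℓ * p ℓ) + σ2 :=
        add_pos_of_nonneg_of_pos
          (Finset.sum_nonneg fun ℓ _ => mul_nonneg (ha i ℓ) (hp ℓ).1) hσ2
      have hg : 0 < gain M σ2 a p i := div_pos (haii i) hD
      refine br_opt (mul_pos (hα i) hW) hg (hlam i) (hpmax i) ?_
      have h1g : 1 / gain M σ2 a p i
          = ((∑ ℓ ∈ Finset.univ.erase i, a i ℓ * p ℓ) + σ2) / a i i := by
        rw [gain, one_div, inv_div]
      rw [h1g]
    have hpay : ∀ i q, payoff M W σ2 α lam a (Function.update p i q) i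
        = α i * W * Real.log (1 + gain M σ2 a p i * q) - lam i * q := by
      intro i q
      have hgeq : gain M σ2 a (Function.update p i q) i = gain M σ2 a p i := by
        rw [gain, gain]
        congr 2
        exact Finset.sum_congr rfl fun ℓ hℓ => by
          rw [Function.update_of_ne (Finset.mem_erase.mp hℓ).1]
      rw [payoff, hgeq, Function.update_self]
    have hpayself : ∀ i, payoff M W σ2 α lam a p i
        = α i * W * Real.log (1 + gain M σ2 a p i * p i) - lam i * p i := fun i => rfl
    constructor
    · intro hne i
      by_contra hne'
      have h1 := (hsetup i).2 (p i) ⟨(hp i).1, (hp i).2⟩ hne'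
      have h2 := hne i (T p i) (hsetup i).1
      rw [hpay, hpayself] at h2
      linarith
    · intro hfixp i q hq
      rw [hpay, hpayself]
      rcases eq_or_ne q (T p i) with rfl | hne'
      · rw [hfixp i]
      · have h1 := (hsetup i).2 q hq hne'
        rw [hfixp i]
        exact h1.le
  -- the d = 0 lemma from the P-matrix hypothesis
  have hdzero : ∀ d : Fin M → ℝ, (∀ i, 0 ≤ d i) →
      (∀ i, a i i * d i ≤ ∑ ℓ ∈ Finset.univ.erase i, a i ℓ * d ℓ) → ∀ i, d i = 0 := by
    intro d hd hineq
    set s : Fin M → ℝ := fun q => 1 + σ2⁻¹ * ∑ l, a q l * pmax l with hs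
    have hs1 : ∀ q, 1 ≤ s q := fun q => le_add_of_nonneg_right
      (mul_nonneg (inv_nonneg.2 hσ2.le)
        (Finset.sum_nonneg fun l _ => mul_nonneg (ha q l) (hpmax l).le))
    have hspos : ∀ q, 0 < s q := fun q => lt_of_lt_of_le one_pos (hs1 q)
    set e : Fin M → ℝ := fun q => a q q * d q / s q with he
    have hednn : ∀ q, 0 ≤ e q := fun q =>
      div_nonneg (mul_nonneg (haii q).le (hd q)) (hspos q).le
    have hQZ : ∀ i j : Fin M, i ≠ j → Qmat M W σ2 α pmax a i j ≤ 0 := by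
      intro i j hij
      rw [Qmat, if_neg hij]
      rw [neg_nonpos]
      refine mul_nonneg (mul_nonneg (mul_nonneg (hα i).le hW.le)
        (div_nonneg (ha i j) (haii j).le)) ?_
      have := hs1 j
      rw [hs] at this
      linarith
    have hQe : ∀ i, (Qmat M W σ2 α pmax a).mulVec e i ≤ 0 := by
      intro i
      have hexp : (Qmat M W σ2 α pmax a).mulVec e i
          = α i * W * (e i - ∑ j ∈ Finset.univ.erase i, a i j * d j) := by
        rw [Matrix.mulVec, dotProduct,
          ← Finset.add_sum_erase Finset.univ _ (Finset.mem_univ i)]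
        have hdiag : Qmat M W σ2 α pmax a i i * e i = α i * W * e i := by
          rw [Qmat, if_pos rfl]
        have hoff : ∀ j ∈ Finset.univ.erase i,
            Qmat M W σ2 α pmax a i j * e j = -(α i * W * (a i j * d j)) := by
          intro j hj
          have hji : i ≠ j := fun h => (Finset.mem_erase.mp hj).1 h.symm
          rw [Qmat, if_neg hji]
          have h1 : e j * s j = a j j * d j := by
            rw [he]
            exact div_mul_cancel₀ _ (hspos j).ne'
          have h2 : s j = 1 + σ2⁻¹ * ∑ l, a j l * pmax l := by rw [hs]
          rw [← h2]
          have h3 : a i j / a j j * (s j * e j) = a i j * d j := by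
            rw [mul_comm (s j) (e j), h1, div_mul_eq_mul_div, mul_comm (a j j) (d j),
              ← mul_assoc, mul_div_cancel_right₀ _ (haii j).ne']
          calc -(α i * W * (a i j / a j j) * s j) * e j
              = -(α i * W * (a i j / a j j * (s j * e j))) := by ring
            _ = -(α i * W * (a i j * d j)) := by rw [h3]
        rw [hdiag, Finset.sum_congr rfl hoff, Finset.sum_neg_distrib,
          ← Finset.mul_sum]
        ring
      rw [hexp]
      have hei : e i ≤ a i i * d i := by
        rw [he]
        exact div_le_self (mul_nonneg (haii i).le (hd i)) (hs1 i)
      have : e i - ∑ j ∈ Finset.univ.erase i, a i j * d j ≤ 0 := by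
        have := hineq i
        linarith
      exact mul_nonpos_iff.mpr (Or.inl ⟨(mul_pos (hα i) hW).le, this⟩)
    have hez := key_nonneg _ hQZ hQ e hednn hQe
    intro i
    have := hez i
    rw [he] at this
    have h3 : a i i * d i = 0 := by
      rcases div_eq_zero_iff.mp this with h | h
      · exact h
      · exact absurd h (hspos i).ne'
    rcases mul_eq_zero.mp h3 with h | h
    · exact absurd h (haii i).ne'
    · exact h
  -- combined Lipschitz consequence for two fixed points
  have hfixdiff : ∀ p p', (∀ i, p i = T p i) → (∀ i, p' i = T p' i) → p = p' := by
    intro p p' hp hp'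
    have hd : ∀ i, (fun j => |p j - p' j|) i = 0 := by
      refine hdzero _ (fun i => abs_nonneg _) (fun i => ?_)
      have h1 : a i i * |T p i - T p' i|
          ≤ ∑ ℓ ∈ Finset.univ.erase i, a i ℓ * |p ℓ - p' ℓ| := hTlip p p' i
      rw [← hp i, ← hp' i] at h1
      exact h1
    funext i
    have := hd i
    simp only [abs_eq_zero, sub_eq_zero] at this
    exact this
  -- Tarski-style existence of a fixed point of T ∘ T
  set Dset : Set (Fin M → ℝ) :=
    {x | (∀ i, x i ∈ Set.Icc (0:ℝ) (pmax i)) ∧ ∀ i, x i ≤ T (T x) i} with hDset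
  have hzeroD : (fun _ => (0:ℝ)) ∈ Dset := by
    constructor
    · exact fun i => ⟨le_rfl, (hpmax i).le⟩
    · exact fun i => (hTbox _ i).1
  have hbdd : ∀ i, BddAbove ((fun x => x i) '' Dset) := by
    intro i
    refine ⟨pmax i, ?_⟩
    rintro y ⟨x, hx, rfl⟩
    exact (hx.1 i).2
  have hnei : ∀ i, ((fun x => x i) '' Dset).Nonempty :=
    fun i => ⟨0, (fun _ => (0:ℝ)), hzeroD, rfl⟩
  set u : Fin M → ℝ := fun i => sSup ((fun x => x i) '' Dset) with hu
  have hub : ∀ x ∈ Dset, ∀ i, x i ≤ u i :=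
    fun x hx i => le_csSup (hbdd i) ⟨x, hx, rfl⟩
  have hSmono : ∀ x y, (∀ ℓ, x ℓ ≤ y ℓ) → ∀ i, T (T x) i ≤ T (T y) i :=
    fun x y h i => hTanti (T y) (T x) (hTanti x y h) i
  have hu0 : ∀ i, (0:ℝ) ≤ u i := fun i => hub _ hzeroD i
  have hupmax : ∀ i, u i ≤ pmax i := fun i => csSup_le (hnei i) (by
    rintro y ⟨x, hx, rfl⟩
    exact (hx.1 i).2)
  have huS : ∀ i, u i ≤ T (T u) i := by
    intro i
    refine csSup_le (hnei i) ?_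
    rintro y ⟨x, hx, rfl⟩
    exact (hx.2 i).trans (hSmono x u (hub x hx) i)
  have hTTuD : T (T u) ∈ Dset := by
    constructor
    · exact fun i => hTbox _ i
    · exact fun i => hSmono u (T (T u)) huS i
  have hufix : ∀ i, T (T u) i = u i :=
    fun i => le_antisymm (hub _ hTTuD i) (huS i)
  -- u is a fixed point of T
  have hTufix : ∀ i, u i = T u i := by
    have hd : ∀ i, (fun j => |u j - T u j|) i = 0 := by
      refine hdzero _ (fun i => abs_nonneg _) (fun i => ?_)
      have h1 : a i i * |T (T u) i - T u i|
          ≤ ∑ ℓ ∈ Finset.univ.erase i, a i ℓ * |T u ℓ - u ℓ| := hTlip (T u) u i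
      have h2 : ∀ ℓ, |T u ℓ - u ℓ| = |u ℓ - T u ℓ| := fun ℓ => abs_sub_comm _ _
      rw [Finset.sum_congr rfl (fun ℓ _ => by rw [h2 ℓ])] at h1
      rw [show |u i - T u i| = |T (T u) i - T u i| from by rw [hufix i]]
      exact h1
    intro i
    have := hd i
    simp only [abs_eq_zero, sub_eq_zero] at this
    exact this
  have hubox : u ∈ stratBox M pmax := fun i => ⟨hu0 i, hupmax i⟩
  refine ⟨u, ⟨hubox, (hfix_iff u hubox).mpr hTufix⟩, ?_⟩
  intro p' ⟨hp'box, hp'ne⟩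
  exact hfixdiff p' u ((hfix_iff p' hp'box).mp hp'ne) hTufix
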